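/- For the four-class SBM edge distribution, the limiting dataset characteristics are h_adj = (4/3)·p₀ − 1/3 and LI = 1 − H(p₀, p₁, p₂, p₂)/log 4. Precisely: let p₀, p₁, p₂ ≥ 0 with p₀ + p₁ + 2·p₂ = 1, and let p be the distribution on Fin 4 × Fin 4 given by p k k = p₀/4 for all k, p k (3 − k) = p₁/4 for all k (pairing class k with its complementary class 3 − k), and p k l = p₂/4 for the remaining two values of l. Then the marginal is uniform, p̄ k = 1/4; the adjusted homophily h_adj = (Σ_k p k k − Σ_k (p̄ k)²)/(1 − Σ_k (p̄ k)²) equals (4·p₀ − 1)/3; and the label informativeness LI(p) equals 1 − H/log 4, where H = −(p₀·log p₀ + p₁·log p₁ + 2·p₂·log p₂) with the convention 0·log 0 = 0. -/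

import Mathlib

open Finset

lemma aux_log4 (x : ℝ) : x * Real.log (4 * x) = x * Real.log 4 + x * Real.log x := by
  rcases eq_or_ne x 0 with h | h
  · simp [h]
  · rw [Real.log_mul (by norm_num) h]; ring

theorem sbm_four_class_characteristics
    (p₀ p₁ p₂ : ℝ) (h0 : 0 ≤ p₀) (h1 : 0 ≤ p₁) (h2 : 0 ≤ p₂)
    (hsum : p₀ + p₁ + 2 * p₂ = 1) :
    let p : Fin 4 → Fin 4 → ℝ := fun k l =>
      if l = k then p₀ / 4 else if l = 3 - k then p₁ / 4 else p₂ / 4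
    let pbar : Fin 4 → ℝ := fun k => ∑ l, p k l
    let H : ℝ := -(p₀ * Real.log p₀ + p₁ * Real.log p₁ + 2 * (p₂ * Real.log p₂))
    (∀ k, pbar k = 1 / 4) ∧
    ((∑ k, p k k) - ∑ k, (pbar k) ^ 2) / (1 - ∑ k, (pbar k) ^ 2)
      = (4 * p₀ - 1) / 3 ∧
    (∑ k, ∑ l, p k l * Real.log (p k l / (pbar k * pbar l))) /
        (-∑ k, pbar k * Real.log (pbar k))
      = 1 - H / Real.log 4 := by
  intro p pbar H
  have hpbar : ∀ k, pbar k = 1 / 4 := by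
    intro k
    fin_cases k <;> simp [pbar, p, Fin.sum_univ_four] <;> linarith
  refine ⟨hpbar, ?_, ?_⟩
  · simp only [Fin.sum_univ_four, hpbar, p]
    norm_num
    ring
  · have hlog4 : Real.log 4 ≠ 0 :=
      ne_of_gt (Real.log_pos (by norm_num))
    have key : ∀ x : ℝ, x / 4 * Real.log (x / 4 / (4⁻¹ * 4⁻¹))
        = x / 4 * Real.log 4 + x / 4 * Real.log x := by
      intro x
      have h4 : x / 4 / (4⁻¹ * 4⁻¹) = 4 * x := by ring
      rw [h4]
      nlinarith [aux_log4 x]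
    simp only [Fin.sum_univ_four, hpbar, p]
    simp
    rw [key p₀, key p₁, key p₂]
    simp only [H]
    field_simp
    linear_combination (4 * Real.log 4) * hsum
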